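/- Let n, k, m be natural numbers with m ≥ 1 and k ≥ 1. For p = 1,…,m let H_p be a real n×k matrix with H_pᵀ H_p = I_k, let W_p be a real k×k matrix with W_pᵀ W_p = I_k, and let β ∈ ℝ^m satisfy β_p ≥ 0 for all p and Σ_{p=1}^m β_p² = 1. Set B = Σ_{p=1}^m β_p H_p W_p. Then for every real n×k matrix F with Fᵀ F = I_k, one has Tr(B Bᵀ) − Tr(Fᵀ B Bᵀ F) ≤ m² k − (1/k)·(Tr(Fᵀ B))². -/

import Mathlib

open Matrix

lemma aux_trace_sq_le (k : ℕ) (M : Matrix (Fin k) (Fin k) ℝ) :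
    (Matrix.trace M) ^ 2 ≤ (k : ℝ) * Matrix.trace (M * Mᵀ) := by
  have h1 : (Matrix.trace M) ^ 2 ≤ (k : ℝ) * ∑ i, (M i i) ^ 2 := by
    simpa [Matrix.trace, Matrix.diag] using sq_sum_le_card_mul_sum_sq (s := Finset.univ) (f := fun i => M i i)
  have h2 : ∑ i, (M i i) ^ 2 ≤ Matrix.trace (M * Mᵀ) := by
    rw [Matrix.trace]
    apply Finset.sum_le_sum
    intro i _
    have : (M * Mᵀ).diag i = ∑ j, (M i j) ^ 2 := by
      simp [Matrix.diag, Matrix.mul_apply, Matrix.transpose_apply, sq]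
    rw [this]
    exact Finset.single_le_sum (f := fun j => (M i j) ^ 2) (fun j _ => sq_nonneg _) (Finset.mem_univ i)
  calc (Matrix.trace M) ^ 2 ≤ (k : ℝ) * ∑ i, (M i i) ^ 2 := h1
    _ ≤ (k : ℝ) * Matrix.trace (M * Mᵀ) := by
        exact mul_le_mul_of_nonneg_left h2 (by positivity)

lemma aux_trace_inner_le (n k : ℕ) (A C : Matrix (Fin n) (Fin k) ℝ)
    (hA : Aᵀ * A = 1) (hC : Cᵀ * C = 1) :
    Matrix.trace (Aᵀ * C) ≤ (k : ℝ) := by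
  have hAA : Matrix.trace (Aᵀ * A) = (k : ℝ) := by rw [hA]; simp
  have hCC : Matrix.trace (Cᵀ * C) = (k : ℝ) := by rw [hC]; simp
  have e : ∀ (X Y : Matrix (Fin n) (Fin k) ℝ),
      Matrix.trace (Xᵀ * Y) = ∑ p : Fin k × Fin n, X p.2 p.1 * Y p.2 p.1 := by
    intro X Y
    rw [Matrix.trace, Fintype.sum_prod_type]
    simp [Matrix.diag, Matrix.mul_apply, Matrix.transpose_apply]
  have cs := Finset.sum_mul_sq_le_sq_mul_sq (Finset.univ)
      (fun p : Fin k × Fin n => A p.2 p.1) (fun p : Fin k × Fin n => C p.2 p.1)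
  have hA2 : ∑ p : Fin k × Fin n, (A p.2 p.1) ^ 2 = (k : ℝ) := by
    have := e A A; rw [hAA] at this; simpa [sq] using this.symm
  have hC2 : ∑ p : Fin k × Fin n, (C p.2 p.1) ^ 2 = (k : ℝ) := by
    have := e C C; rw [hCC] at this; simpa [sq] using this.symm
  rw [hA2, hC2] at cs
  rw [e A C]
  nlinarith [cs, Nat.cast_nonneg (α := ℝ) k]

/-- The upper-bound chain in the proof of Theorem 1:
`Tr(B Bᵀ) − Tr(Fᵀ B Bᵀ F) ≤ m² k − (1/k)·(Tr(Fᵀ B))²`. -/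
theorem kmeans_loss_upper_bound
    (n k m : ℕ) (hm : 1 ≤ m) (hk : 1 ≤ k)
    (H : Fin m → Matrix (Fin n) (Fin k) ℝ)
    (hH : ∀ p, (H p)ᵀ * H p = 1)
    (W : Fin m → Matrix (Fin k) (Fin k) ℝ)
    (hW : ∀ p, (W p)ᵀ * W p = 1)
    (β : Fin m → ℝ) (hβ : ∀ p, 0 ≤ β p) (hβnorm : ∑ p, (β p) ^ 2 = 1)
    (B : Matrix (Fin n) (Fin k) ℝ) (hB : B = ∑ p, β p • (H p * W p))
    (F : Matrix (Fin n) (Fin k) ℝ) (hF : Fᵀ * F = 1) :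
    Matrix.trace (B * Bᵀ) - Matrix.trace (Fᵀ * B * Bᵀ * F)
      ≤ (m : ℝ) ^ 2 * k - (1 / (k : ℝ)) * (Matrix.trace (Fᵀ * B)) ^ 2 := by
  have hkpos : (0 : ℝ) < k := by exact_mod_cast hk
  -- orthonormality of each H p * W p
  have hortho : ∀ p, (H p * W p)ᵀ * (H p * W p) = 1 := by
    intro p
    rw [Matrix.transpose_mul]
    calc (W p)ᵀ * (H p)ᵀ * (H p * W p) = (W p)ᵀ * ((H p)ᵀ * H p) * W p := by
          rw [Matrix.mul_assoc, Matrix.mul_assoc, Matrix.mul_assoc]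
      _ = 1 := by rw [hH p, Matrix.mul_one, hW p]
  -- Part 1 : Tr(B Bᵀ) ≤ m² k
  have part1 : Matrix.trace (B * Bᵀ) ≤ (m : ℝ) ^ 2 * k := by
    rw [Matrix.trace_mul_comm]
    have expand : Matrix.trace (Bᵀ * B)
        = ∑ q, ∑ p, β q * β p * Matrix.trace ((H q * W q)ᵀ * (H p * W p)) := by
      rw [hB]
      simp only [Matrix.transpose_sum, Matrix.transpose_smul, Matrix.sum_mul,
        Matrix.mul_sum, Matrix.smul_mul, Matrix.mul_smul, Matrix.trace_sum,
        Matrix.trace_smul, smul_smul, smul_eq_mul]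
      simp_rw [Finset.mul_sum]
      rw [Finset.sum_comm]
      apply Finset.sum_congr rfl; intro q _
      apply Finset.sum_congr rfl; intro p _
      ring
    rw [expand]
    have step : ∑ q, ∑ p, β q * β p * Matrix.trace ((H q * W q)ᵀ * (H p * W p))
        ≤ ∑ q, ∑ p, β q * β p * (k : ℝ) := by
      apply Finset.sum_le_sum; intro q _
      apply Finset.sum_le_sum; intro p _
      exact mul_le_mul_of_nonneg_left
        (aux_trace_inner_le n k _ _ (hortho q) (hortho p))
        (mul_nonneg (hβ q) (hβ p))
    have sumsq : (∑ p, β p) ^ 2 ≤ (m : ℝ) := by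
      have := sq_sum_le_card_mul_sum_sq (s := Finset.univ) (f := β)
      simpa [hβnorm] using this
    calc ∑ q, ∑ p, β q * β p * Matrix.trace ((H q * W q)ᵀ * (H p * W p))
        ≤ ∑ q, ∑ p, β q * β p * (k : ℝ) := step
      _ = (∑ p, β p) ^ 2 * k := by
          rw [sq, Finset.sum_mul_sum, Finset.sum_mul]
          apply Finset.sum_congr rfl; intro q _
          rw [Finset.sum_mul]
      _ ≤ (m : ℝ) * k := by
          apply mul_le_mul_of_nonneg_right sumsq hkpos.le
      _ ≤ (m : ℝ) ^ 2 * k := by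
          have hm1 : (1 : ℝ) ≤ (m : ℝ) := by exact_mod_cast hm
          have h2 : (m : ℝ) ≤ (m : ℝ) ^ 2 := by nlinarith
          exact mul_le_mul_of_nonneg_right h2 hkpos.le
  -- Part 2 : (1/k)·(Tr(Fᵀ B))² ≤ Tr(Fᵀ B Bᵀ F)
  have part2 : (1 / (k : ℝ)) * (Matrix.trace (Fᵀ * B)) ^ 2
      ≤ Matrix.trace (Fᵀ * B * Bᵀ * F) := by
    have hre : Fᵀ * B * Bᵀ * F = (Fᵀ * B) * (Fᵀ * B)ᵀ := by
      rw [Matrix.transpose_mul, Matrix.transpose_transpose, Matrix.mul_assoc]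
    rw [hre]
    have := aux_trace_sq_le k (Fᵀ * B)
    rw [div_mul_eq_mul_div, one_mul, div_le_iff₀ hkpos]
    linarith [this]
  linarith [part1, part2]
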